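/- Let n = 2m + μ with μ ∈ {0,1} and m̂ = m + μ. Let 0 ≤ σ₁ ≤ σ₂ ≤ ⋯ ≤ σ_n be real numbers and set x_j = σ_{2j−1} for j = 1,…,m̂ and y_j = σ_{2j} for j = 1,…,m. Then ∑_{ε ∈ {−1,+1}^n} | ∏_{1≤j<k≤n} (ε_k σ_k − ε_j σ_j) | = 2^n · ∏_{1≤j<k≤m̂} (x_k² − x_j²) · ∏_{k=1}^{m} y_k · ∏_{1≤j<k≤m} (y_k² − y_j²). (Empty products equal 1.) -/

import Mathlib

open Finset Matrix

lemma svs_pairsComm {n : ℕ} (f : Fin n → Fin n → ℝ) :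
    (∏ k : Fin n, ∏ j ∈ Finset.Iio k, f k j) = ∏ j : Fin n, ∏ k ∈ Finset.Ioi j, f k j :=
  Finset.prod_comm' (fun k j => by simp)

lemma svs_det_vandermonde {n : ℕ} (v : Fin n → ℝ) :
    Matrix.det (Matrix.vandermonde v) = ∏ k : Fin n, ∏ j ∈ Finset.Iio k, (v k - v j) := by
  rw [Matrix.det_vandermonde, svs_pairsComm]

lemma svs_abs_factor {a b : ℝ} (h0 : 0 ≤ a) (hab : a ≤ b) (p q : Bool) :
    |(if p then (1:ℝ) else -1) * b - (if q then (1:ℝ) else -1) * a|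
      = b - (if p then (1:ℝ) else -1) * ((if q then (1:ℝ) else -1) * a) := by
  cases p <;> cases q <;>
    simp only [Bool.false_eq_true, if_true, if_false, one_mul, neg_one_mul, neg_mul, neg_neg,
      sub_neg_eq_add]
  · rw [show (-b + a) = -(b - a) by ring, abs_neg, abs_of_nonneg (by linarith)]
  · rw [show (-b - a) = -(b + a) by ring, abs_neg, abs_of_nonneg (by linarith)]
  · rw [abs_of_nonneg (by linarith)]
  · rw [abs_of_nonneg (by linarith)]

lemma svs_sign_pull {n : ℕ} (c σ : Fin n → ℝ) (hc : ∀ k, c k * c k = 1) :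
    (∏ k : Fin n, ∏ j ∈ Finset.Iio k, (σ k - c k * (c j * σ j)))
      = (∏ k : Fin n, c k ^ (k : ℕ)) *
        ∏ k : Fin n, ∏ j ∈ Finset.Iio k, (c k * σ k - c j * σ j) := by
  rw [← Finset.prod_mul_distrib]
  refine Finset.prod_congr rfl fun k _ => ?_
  have hck : (c k) ^ (k : ℕ) = ∏ _j ∈ Finset.Iio k, c k := by
    rw [Finset.prod_const, Fin.card_Iio]
  rw [hck, ← Finset.prod_mul_distrib]
  refine Finset.prod_congr rfl fun j _ => ?_
  linear_combination (-(σ k)) * hc k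

lemma svs_expand {N : ℕ} (σ : Fin N → ℝ) :
    (∑ ε : Fin N → Bool,
      (∏ k : Fin N, (if ε k then (1:ℝ) else -1) ^ (k : ℕ)) *
        Matrix.det (Matrix.vandermonde fun i => (if ε i then (1:ℝ) else -1) * σ i))
    = Matrix.det (Matrix.of fun i j : Fin N =>
        (1 + (-1:ℝ) ^ ((i : ℕ) + (j : ℕ))) * σ i ^ (j : ℕ)) := by
  classical
  set f := (Matrix.detRowAlternating : (Fin N → ℝ) [⋀^Fin N]→ₗ[ℝ] ℝ) with hf
  set g : Fin N → Bool → (Fin N → ℝ) := fun i b =>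
    ((if b then (1:ℝ) else -1) ^ (i : ℕ)) •
      (fun j : Fin N => ((if b then (1:ℝ) else -1) * σ i) ^ (j : ℕ)) with hg
  have h1 : ∀ ε : Fin N → Bool,
      (∏ k : Fin N, (if ε k then (1:ℝ) else -1) ^ (k : ℕ)) *
        Matrix.det (Matrix.vandermonde fun i => (if ε i then (1:ℝ) else -1) * σ i)
      = f.toMultilinearMap (fun i => g i (ε i)) := by
    intro ε
    rw [show (fun i => g i (ε i)) = fun i =>
        ((if ε i then (1:ℝ) else -1) ^ (i : ℕ)) •
          ((Matrix.vandermonde fun i => (if ε i then (1:ℝ) else -1) * σ i) i) from rfl]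
    exact (f.toMultilinearMap.map_smul_univ _ _).symm
  have hrows : (fun i => ∑ b : Bool, g i b)
      = fun (i j : Fin N) => (1 + (-1:ℝ) ^ ((i : ℕ) + (j : ℕ))) * σ i ^ (j : ℕ) := by
    funext i j
    rw [Fintype.sum_bool]
    simp only [hg, if_true, if_false, Bool.false_eq_true, Pi.add_apply, Pi.smul_apply,
      smul_eq_mul, one_pow, one_mul, neg_one_mul]
    rw [neg_pow, pow_add]
    ring
  simp_rw [h1]
  rw [← f.toMultilinearMap.map_sum g, hrows]
  rfl

def svsEquiv (m μ : ℕ) (hμ : μ ≤ 1) : (Fin (m + μ) ⊕ Fin m) ≃ Fin (2 * m + μ) where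
  toFun := Sum.elim (fun k => ⟨2 * (k : ℕ), by have := k.isLt; omega⟩)
    (fun k => ⟨2 * (k : ℕ) + 1, by have := k.isLt; omega⟩)
  invFun i := if h : (i : ℕ) % 2 = 0 then Sum.inl ⟨(i : ℕ) / 2, by have := i.isLt; omega⟩
    else Sum.inr ⟨(i : ℕ) / 2, by have := i.isLt; omega⟩
  left_inv := by
    rintro (k | k)
    · simp only [Sum.elim_inl]
      show (if h : 2 * (k:ℕ) % 2 = 0 then _ else _) = _
      rw [dif_pos (by omega)]
      simp only [Sum.inl.injEq, Fin.ext_iff]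
      omega
    · simp only [Sum.elim_inr]
      show (if h : (2 * (k:ℕ) + 1) % 2 = 0 then _ else _) = _
      rw [dif_neg (by omega)]
      simp only [Sum.inr.injEq, Fin.ext_iff]
      omega
  right_inv := by
    intro i
    by_cases h : (i : ℕ) % 2 = 0
    · simp only [dif_pos h]
      simp only [Sum.elim_inl, Fin.ext_iff]
      omega
    · simp only [dif_neg h]
      simp only [Sum.elim_inr, Fin.ext_iff]
      omega

lemma svs_det_block (m μ : ℕ) (hμ : μ ≤ 1) (σ : Fin (2 * m + μ) → ℝ) :
    Matrix.det (Matrix.of fun i j : Fin (2 * m + μ) =>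
        (1 + (-1:ℝ) ^ ((i : ℕ) + (j : ℕ))) * σ i ^ (j : ℕ))
    = (2 ^ (m + μ) *
        Matrix.det (Matrix.vandermonde fun k : Fin (m + μ) =>
          σ ⟨2 * (k : ℕ), by have := k.isLt; omega⟩ ^ 2)) *
      ((2 ^ m * ∏ k : Fin m, σ ⟨2 * (k : ℕ) + 1, by have := k.isLt; omega⟩) *
        Matrix.det (Matrix.vandermonde fun k : Fin m =>
          σ ⟨2 * (k : ℕ) + 1, by have := k.isLt; omega⟩ ^ 2)) := by
  set x2 : Fin (m + μ) → ℝ := fun k => σ ⟨2 * (k : ℕ), by have := k.isLt; omega⟩ ^ 2 with hx2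
  set y : Fin m → ℝ := fun k => σ ⟨2 * (k : ℕ) + 1, by have := k.isLt; omega⟩ with hy
  set M := Matrix.of fun i j : Fin (2 * m + μ) =>
      (1 + (-1:ℝ) ^ ((i : ℕ) + (j : ℕ))) * σ i ^ (j : ℕ) with hM
  set e := svsEquiv m μ hμ with he
  rw [← Matrix.det_submatrix_equiv_self e M]
  have hblock : M.submatrix e e =
      Matrix.fromBlocks
        (Matrix.of fun k l : Fin (m + μ) => (2:ℝ) * Matrix.vandermonde x2 k l) 0 0
        (Matrix.of fun k l : Fin m => (2 * y k) * Matrix.vandermonde (fun k => (y k) ^ 2) k l) := by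
    ext a b
    rcases a with k | k <;> rcases b with l | l <;>
      simp only [Matrix.submatrix_apply, he, svsEquiv, Equiv.coe_fn_mk, Sum.elim_inl,
        Sum.elim_inr, Matrix.of_apply, Matrix.fromBlocks_apply₁₁, Matrix.fromBlocks_apply₁₂,
        Matrix.fromBlocks_apply₂₁, Matrix.fromBlocks_apply₂₂, Matrix.vandermonde_apply, hM,
        Matrix.zero_apply, hx2, hy]
    · rw [show 2 * (k:ℕ) + 2 * (l:ℕ) = 2 * ((k:ℕ) + (l:ℕ)) by ring, pow_mul, neg_one_sq, one_pow,
        pow_mul]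
      ring
    · rw [(Odd.neg_one_pow ⟨(k:ℕ) + (l:ℕ), by ring⟩ : (-1:ℝ) ^ (2*(k:ℕ) + (2*(l:ℕ)+1)) = -1)]
      ring
    · rw [(Odd.neg_one_pow ⟨(k:ℕ) + (l:ℕ), by ring⟩ : (-1:ℝ) ^ (2*(k:ℕ)+1 + 2*(l:ℕ)) = -1)]
      ring
    · rw [show 2 * (k:ℕ) + 1 + (2 * (l:ℕ) + 1) = 2 * ((k:ℕ) + (l:ℕ) + 1) by ring, pow_mul,
        neg_one_sq, one_pow, pow_succ, pow_mul]
      ring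
  rw [hblock, Matrix.det_fromBlocks_zero₂₁]
  rw [show (Matrix.of fun k l : Fin (m + μ) => (2:ℝ) * Matrix.vandermonde x2 k l)
      = Matrix.of fun k l => (fun _ : Fin (m + μ) => (2:ℝ)) k * Matrix.vandermonde x2 k l from rfl,
    Matrix.det_mul_column]
  rw [show (Matrix.of fun k l : Fin m => (2 * y k) * Matrix.vandermonde (fun k => (y k) ^ 2) k l)
      = Matrix.of fun k l => (fun k => 2 * y k) k * Matrix.vandermonde (fun k => (y k) ^ 2) k l
      from rfl, Matrix.det_mul_column]
  rw [Finset.prod_const, Finset.prod_mul_distrib, Finset.prod_const]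
  simp only [Finset.card_univ, Fintype.card_fin]
  rfl

/-- the sum over all sign vectors of the absolute Vandermonde of the
signed ordered values `σ₁ ≤ ⋯ ≤ σ_n` factorizes into the Vandermonde of the squares of
the odd-indexed values, the even-indexed values and the Vandermonde of their squares. -/
theorem signed_vandermonde_sum (n m μ : ℕ) (hμ : μ = 0 ∨ μ = 1) (hn : n = 2 * m + μ)
    (σ : Fin n → ℝ) (hmono : Monotone σ) (hnonneg : ∀ i, 0 ≤ σ i) :
    (∑ ε : Fin n → Bool,
      |∏ k : Fin n, ∏ j ∈ Finset.Iio k,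
        ((if ε k then (1 : ℝ) else -1) * σ k - (if ε j then (1 : ℝ) else -1) * σ j)|) =
    2 ^ n *
      (∏ k : Fin (m + μ), ∏ j ∈ Finset.Iio k,
        (σ ⟨2 * (k : ℕ), by have := k.isLt; omega⟩ ^ 2 -
         σ ⟨2 * (j : ℕ), by have := j.isLt; omega⟩ ^ 2)) *
      (∏ k : Fin m, σ ⟨2 * (k : ℕ) + 1, by have := k.isLt; omega⟩) *
      (∏ k : Fin m, ∏ j ∈ Finset.Iio k,
        (σ ⟨2 * (k : ℕ) + 1, by have := k.isLt; omega⟩ ^ 2 -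
         σ ⟨2 * (j : ℕ) + 1, by have := j.isLt; omega⟩ ^ 2)) := by
  subst hn
  have hμ' : μ ≤ 1 := by omega
  have hstep1 : ∀ ε : Fin (2 * m + μ) → Bool,
      |∏ k : Fin (2 * m + μ), ∏ j ∈ Finset.Iio k,
        ((if ε k then (1 : ℝ) else -1) * σ k - (if ε j then (1 : ℝ) else -1) * σ j)|
      = (∏ k : Fin (2 * m + μ), (if ε k then (1:ℝ) else -1) ^ (k : ℕ)) *
          Matrix.det (Matrix.vandermonde fun i => (if ε i then (1:ℝ) else -1) * σ i) := by
    intro ε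
    have hcc : ∀ k, (fun i => if ε i then (1:ℝ) else -1) k *
        (fun i => if ε i then (1:ℝ) else -1) k = 1 := fun k => by
      by_cases h : ε k <;> simp [h]
    rw [svs_det_vandermonde, ← svs_sign_pull (fun i => if ε i then (1:ℝ) else -1) σ hcc]
    rw [Finset.abs_prod]
    refine Finset.prod_congr rfl fun k _ => ?_
    rw [Finset.abs_prod]
    refine Finset.prod_congr rfl fun j hj => ?_
    exact svs_abs_factor (hnonneg j) (hmono (Finset.mem_Iio.mp hj).le) (ε k) (ε j)
  rw [Finset.sum_congr rfl fun ε _ => hstep1 ε, svs_expand σ, svs_det_block m μ hμ' σ,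
    svs_det_vandermonde, svs_det_vandermonde]
  ring
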